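/- The log conjugate-prior density is concave: for every integer n ≥ 2, every η > 0, and every ν ∈ ℝ^n, the function F(α) := η·[log Γ(∑_{i=1}^n α_i) − ∑_{i=1}^n log Γ(α_i)] − ∑_{i=1}^n α_i·ν_i is concave on the set {α ∈ ℝ^n : α_i > 0 for all i}. -/

import Mathlib

open Real MeasureTheory Set Filter

noncomputable def betaR (x y : ℝ) : ℝ := ∫ t in Ioo (0:ℝ) 1, t ^ (x-1) * (1-t) ^ (y-1)

lemma ofReal_integrand {x y : ℝ} {t : ℝ} (ht : t ∈ Icc (0:ℝ) 1) :
    ((t ^ (x-1) * (1-t) ^ (y-1) : ℝ) : ℂ) = (t:ℂ) ^ ((x:ℂ)-1) * (1-(t:ℂ)) ^ ((y:ℂ)-1) := by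
  have h1 : ((x:ℂ)-1) = ((x-1 : ℝ) : ℂ) := by push_cast; ring
  have h2 : ((y:ℂ)-1) = ((y-1 : ℝ) : ℂ) := by push_cast; ring
  have h3 : (1 - (t:ℂ)) = ((1-t : ℝ) : ℂ) := by push_cast; ring
  rw [h1, h2, h3, ← Complex.ofReal_cpow ht.1, ← Complex.ofReal_cpow (by linarith [ht.2]),
    Complex.ofReal_mul]

lemma integrableOn_beta {x y : ℝ} (hx : 0 < x) (hy : 0 < y) :
    IntegrableOn (fun t : ℝ => t ^ (x-1) * (1-t) ^ (y-1)) (Ioo (0:ℝ) 1) := by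
  have h := Complex.betaIntegral_convergent (u := (x:ℂ)) (v := (y:ℂ)) (by simpa) (by simpa)
  rw [intervalIntegrable_iff_integrableOn_Ioc_of_le zero_le_one] at h
  have h2 : IntegrableOn (fun t : ℝ => t ^ (x-1) * (1-t) ^ (y-1)) (Ioc (0:ℝ) 1) := by
    refine (h.re).congr (eventuallyEq_of_mem (self_mem_ae_restrict measurableSet_Ioc)
      fun t ht => ?_)
    rw [← ofReal_integrand (Ioc_subset_Icc_self ht)]; exact Complex.ofReal_re _
  exact h2.mono_set Ioo_subset_Ioc_self

lemma Gamma_mul_Gamma_eq_betaR {x y : ℝ} (hx : 0 < x) (hy : 0 < y) :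
    Gamma x * Gamma y = Gamma (x + y) * betaR x y := by
  have h := Complex.Gamma_mul_Gamma_eq_betaIntegral (s := (x:ℂ)) (t := (y:ℂ)) (by simpa) (by simpa)
  have hb : Complex.betaIntegral (x:ℂ) (y:ℂ) = ((betaR x y : ℝ) : ℂ) := by
    rw [Complex.betaIntegral]
    rw [show ∫ t in (0:ℝ)..1, (t:ℂ) ^ ((x:ℂ)-1) * (1-(t:ℂ)) ^ ((y:ℂ)-1)
        = ∫ t in (0:ℝ)..1, ((t ^ (x-1) * (1-t) ^ (y-1) : ℝ) : ℂ) from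
      intervalIntegral.integral_congr fun t ht => by
        rw [uIcc_of_le zero_le_one] at ht
        exact (ofReal_integrand ht).symm]
    rw [intervalIntegral.integral_ofReal]
    norm_cast
    rw [intervalIntegral.integral_of_le zero_le_one, integral_Ioc_eq_integral_Ioo]
    rfl
  rw [hb, ← Complex.ofReal_add, Complex.Gamma_ofReal, Complex.Gamma_ofReal,
    Complex.Gamma_ofReal, ← Complex.ofReal_mul, ← Complex.ofReal_mul] at h
  exact_mod_cast h

lemma betaR_pos {x y : ℝ} (hx : 0 < x) (hy : 0 < y) : 0 < betaR x y := by
  have h := Gamma_mul_Gamma_eq_betaR hx hy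
  have h1 : 0 < Gamma x * Gamma y := mul_pos (Gamma_pos_of_pos hx) (Gamma_pos_of_pos hy)
  have h2 : 0 < Gamma (x + y) := Gamma_pos_of_pos (by linarith)
  have hb : betaR x y = Gamma x * Gamma y / Gamma (x + y) := by
    rw [eq_div_iff h2.ne']; linarith
  rw [hb]; positivity

lemma betaR_convex {x₁ y₁ x₂ y₂ a b : ℝ} (hx₁ : 0 < x₁) (hy₁ : 0 < y₁) (hx₂ : 0 < x₂)
    (hy₂ : 0 < y₂) (ha : 0 < a) (hb : 0 < b) (hab : a + b = 1) :
    betaR (a*x₁+b*x₂) (a*y₁+b*y₂) ≤ betaR x₁ y₁ ^ a * betaR x₂ y₂ ^ b := by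
  let f : ℝ → ℝ → ℝ → ℝ → ℝ := fun c u v t => t ^ (c*(u-1)) * (1-t) ^ (c*(v-1))
  have e : Real.HolderConjugate (1 / a) (1 / b) := Real.holderConjugate_one_div ha hb hab
  have posf : ∀ c u v t : ℝ, t ∈ Ioo (0:ℝ) 1 → 0 ≤ f c u v t := fun c u v t ht =>
    mul_nonneg (rpow_pos_of_pos ht.1 _).le (rpow_pos_of_pos (by linarith [ht.2]) _).le
  have posf' : ∀ c u v : ℝ, ∀ᵐ t : ℝ ∂volume.restrict (Ioo 0 1), 0 ≤ f c u v t := fun c u v =>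
    (ae_restrict_iff' measurableSet_Ioo).mpr (ae_of_all _ (posf c u v))
  have fpow : ∀ {c : ℝ}, 0 < c → ∀ (u v : ℝ) {t : ℝ}, t ∈ Ioo (0:ℝ) 1 →
      t ^ (u-1) * (1-t) ^ (v-1) = f c u v t ^ (1 / c) := by
    intro c hc u v t ht
    dsimp only [f]
    rw [mul_rpow (rpow_pos_of_pos ht.1 _).le (rpow_pos_of_pos (by linarith [ht.2]) _).le,
      ← rpow_mul ht.1.le, ← rpow_mul (by linarith [ht.2])]
    congr 2 <;> field_simp
  have f_mem_Lp : ∀ {c u v : ℝ}, 0 < c → 0 < u → 0 < v →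
      MemLp (f c u v) (ENNReal.ofReal (1 / c)) (volume.restrict (Ioo 0 1)) := by
    intro c u v hc hu hv
    have A : ENNReal.ofReal (1 / c) ≠ 0 := by
      rwa [Ne, ENNReal.ofReal_eq_zero, not_le, one_div_pos]
    have B : ENNReal.ofReal (1 / c) ≠ ⊤ := ENNReal.ofReal_ne_top
    rw [← memLp_norm_rpow_iff _ A B, ENNReal.toReal_ofReal (one_div_nonneg.mpr hc.le),
      ENNReal.div_self A B, memLp_one_iff_integrable]
    · apply Integrable.congr (integrableOn_beta hu hv)
      refine eventuallyEq_of_mem (self_mem_ae_restrict measurableSet_Ioo) fun t ht => ?_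
      rw [fpow hc u v ht]
      congr 1
      exact (norm_of_nonneg (posf _ _ _ t ht)).symm
    · refine ContinuousOn.aestronglyMeasurable ?_ measurableSet_Ioo
      refine ContinuousOn.mul ?_ ?_ <;> intro t ht
      · exact (continuousAt_rpow_const _ _ (Or.inl ht.1.ne')).continuousWithinAt
      · exact (ContinuousAt.comp (continuousAt_rpow_const _ _ (Or.inl (sub_pos.mpr ht.2).ne'))
          ((continuous_const.sub continuous_id).continuousAt)).continuousWithinAt
  unfold betaR
  convert! MeasureTheory.integral_mul_le_Lp_mul_Lq_of_nonneg e (posf' a x₁ y₁) (posf' b x₂ y₂)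
    (f_mem_Lp ha hx₁ hy₁) (f_mem_Lp hb hx₂ hy₂) using 1
  · refine setIntegral_congr_fun measurableSet_Ioo fun t ht => ?_
    dsimp only [f]
    have A : t ^ (a*x₁+b*x₂-1) = t ^ (a*(x₁-1)) * t ^ (b*(x₂-1)) := by
      rw [← rpow_add ht.1]; congr 1; nlinarith
    have B : (1-t) ^ (a*y₁+b*y₂-1) = (1-t) ^ (a*(y₁-1)) * (1-t) ^ (b*(y₂-1)) := by
      rw [← rpow_add (by linarith [ht.2] : (0:ℝ) < 1-t)]; congr 1; nlinarith
    rw [A, B]; ring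
  · rw [one_div_one_div, one_div_one_div]
    congr 2 <;> exact setIntegral_congr_fun measurableSet_Ioo fun t ht => fpow (by assumption) _ _ ht

lemma log_sub_eq {x y : ℝ} (hx : 0 < x) (hy : 0 < y) :
    log (Gamma (x + y)) - log (Gamma x) - log (Gamma y) = - log (betaR x y) := by
  have h := congrArg log (Gamma_mul_Gamma_eq_betaR hx hy)
  rw [log_mul (Gamma_pos_of_pos hx).ne' (Gamma_pos_of_pos hy).ne',
    log_mul (Gamma_pos_of_pos (by linarith)).ne' (betaR_pos hx hy).ne'] at h
  linarith

lemma concaveOn_h : ConcaveOn ℝ (Ioi (0:ℝ) ×ˢ Ioi (0:ℝ))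
    (fun p : ℝ × ℝ => log (Gamma (p.1 + p.2)) - log (Gamma p.1) - log (Gamma p.2)) := by
  refine concaveOn_iff_forall_pos.mpr ⟨(convex_Ioi _).prod (convex_Ioi _), ?_⟩
  rintro ⟨x₁, y₁⟩ ⟨hx₁, hy₁⟩ ⟨x₂, y₂⟩ ⟨hx₂, hy₂⟩ a b ha hb hab
  simp only [mem_Ioi] at hx₁ hy₁ hx₂ hy₂
  simp only [Prod.smul_mk, Prod.mk_add_mk, smul_eq_mul]
  rw [log_sub_eq hx₁ hy₁, log_sub_eq hx₂ hy₂,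
    log_sub_eq (by positivity) (by positivity)]
  have h := betaR_convex hx₁ hy₁ hx₂ hy₂ ha hb hab
  have h2 := Real.log_le_log (betaR_pos (by positivity) (by positivity)) h
  rw [log_mul (rpow_pos_of_pos (betaR_pos hx₁ hy₁) a).ne' (rpow_pos_of_pos (betaR_pos hx₂ hy₂) b).ne',
    log_rpow (betaR_pos hx₁ hy₁),
    log_rpow (betaR_pos hx₂ hy₂)] at h2
  linarith

lemma convex_pos_orthant (n : ℕ) : Convex ℝ {α : Fin n → ℝ | ∀ i, 0 < α i} := by
  have : {α : Fin n → ℝ | ∀ i, 0 < α i} = Set.univ.pi fun _ => Ioi (0:ℝ) := by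
    ext α; simp [Set.mem_pi]
  rw [this]
  exact convex_pi fun i _ => convex_Ioi 0

lemma concave_G : ∀ n : ℕ, 1 ≤ n → ConcaveOn ℝ {α : Fin n → ℝ | ∀ i, 0 < α i}
    (fun α : Fin n → ℝ => log (Gamma (∑ i, α i)) - ∑ i, log (Gamma (α i))) := by
  intro n hn
  induction n, hn using Nat.le_induction with
  | base =>
    have : (fun α : Fin 1 → ℝ => log (Gamma (∑ i, α i)) - ∑ i, log (Gamma (α i)))
        = fun _ => (0:ℝ) := by
      funext α; simp [Fin.sum_univ_one]
    rw [this]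
    exact concaveOn_const 0 (convex_pos_orthant 1)
  | succ n hn IH =>
    set L : (Fin (n+1) → ℝ) →ₗ[ℝ] (Fin n → ℝ) := LinearMap.funLeft ℝ ℝ Fin.castSucc with hL
    set M : (Fin (n+1) → ℝ) →ₗ[ℝ] ℝ × ℝ := LinearMap.prod
      { toFun := fun α : Fin (n+1) → ℝ => ∑ i : Fin n, α i.castSucc
        map_add' := by intros; simp [Finset.sum_add_distrib]
        map_smul' := by intros; simp [Finset.mul_sum] }
      (LinearMap.proj (Fin.last n)) with hM
    have key : (fun α : Fin (n+1) → ℝ => log (Gamma (∑ i, α i)) - ∑ i, log (Gamma (α i)))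
        = fun α : Fin (n+1) → ℝ =>
          (log (Gamma (∑ i, (L α) i)) - ∑ i, log (Gamma ((L α) i)))
          + (log (Gamma ((M α).1 + (M α).2)) - log (Gamma (M α).1) - log (Gamma (M α).2)) := by
      funext α
      simp only [hL, hM, LinearMap.funLeft_apply, LinearMap.prod_apply, LinearMap.coe_mk,
        AddHom.coe_mk, LinearMap.proj_apply, Pi.prod, Function.prod, Function.comp]
      rw [Fin.sum_univ_castSucc (f := α), Fin.sum_univ_castSucc (f := fun i => log (Gamma (α i)))]
      ring
    rw [key]
    have h1 : ConcaveOn ℝ {α : Fin (n+1) → ℝ | ∀ i, 0 < α i}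
        (fun α => log (Gamma (∑ i, (L α) i)) - ∑ i, log (Gamma ((L α) i))) := by
      refine (IH.comp_linearMap L).subset (fun α hα => ?_) (convex_pos_orthant (n+1))
      exact fun i => hα i.castSucc
    have h2 : ConcaveOn ℝ {α : Fin (n+1) → ℝ | ∀ i, 0 < α i}
        (fun α => log (Gamma ((M α).1 + (M α).2)) - log (Gamma (M α).1) - log (Gamma (M α).2)) := by
      refine (concaveOn_h.comp_linearMap M).subset (fun α hα => ?_) (convex_pos_orthant (n+1))
      constructor
      · exact Finset.sum_pos (fun i _ => hα (Fin.castSucc i))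
          (Finset.univ_nonempty_iff.mpr (Fin.pos_iff_nonempty.mp (by omega)))
      · exact hα (Fin.last n)
    exact h1.add h2

/-- The log conjugate-prior density is concave: for every `n ≥ 2`, `η > 0`,
and `ν ∈ ℝⁿ`, the function
`F(α) = η·[log Γ(∑ α_i) − ∑ log Γ(α_i)] − ∑ α_i·ν_i` is concave on the
positive orthant. -/
theorem log_conjugate_prior_concave (n : ℕ) (hn : 2 ≤ n) (η : ℝ) (hη : 0 < η)
    (ν : Fin n → ℝ) :
    ConcaveOn ℝ {α : Fin n → ℝ | ∀ i, 0 < α i}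
      (fun α : Fin n → ℝ =>
        η * (Real.log (Real.Gamma (∑ i, α i)) - ∑ i, Real.log (Real.Gamma (α i)))
          - ∑ i, α i * ν i) := by
  have hG := (concave_G n (by omega)).smul hη.le
  have hlin : ConvexOn ℝ {α : Fin n → ℝ | ∀ i, 0 < α i}
      (fun α : Fin n → ℝ => ∑ i, α i * ν i) := by
    exact LinearMap.convexOn
      { toFun := fun α : Fin n → ℝ => ∑ i, α i * ν i
        map_add' := by intros; simp [Finset.sum_add_distrib, add_mul]
        map_smul' := by intros; simp [Finset.mul_sum, mul_assoc] }
      (convex_pos_orthant n)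
  have := hG.sub hlin
  exact this
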